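/- Fix d ≥ 1 and q ∈ ℝ. Let g be a coordinate metric on ℝ^{d+1} with Christoffel symbols Γ^μ_{αβ}, let F_{μν} : ℝ^{d+1} → ℝ be antisymmetric (F_{μν} = −F_{νμ}), and let α : ℝ^{d+1} → ℝ and β_μ : ℝ^{d+1} → ℝ^{d+1} be differentiable. Assume that at every x ∈ ℝ^{d+1}: (i) ∂_μ α(x) + q·β^ν(x)·F_{μν}(x) = 0 for all μ, where β^ν := g^{νρ}β_ρ; and (ii) ½(∂_μ β_ν + ∂_ν β_μ)(x) − Γ^ρ_{μν}(x)·β_ρ(x) = 0 for all μ, ν. Then φ(x,p) := exp(−α(x) + β_μ(x)·p^μ) satisfies the Liouville equation identically: for all (x,p) ∈ ℝ^{d+1} × ℝ^{d+1}, p^μ·(∂φ/∂x^μ − Γ^ρ_{μσ}(x)·p^σ·∂φ/∂p^ρ) + q·g^{μρ}(x)F_{ρν}(x)·p^ν·∂φ/∂p^μ = 0. -/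

import Mathlib

/-- The Christoffel symbols `Γ^μ_{αβ} = ½ g^{μρ} (∂_α g_{ρβ} + ∂_β g_{ρα} − ∂_ρ g_{αβ})`
of a coordinate metric `g`, expressed via the array `Dg` of partial derivatives of `g`
(`Dg y α ρ β = ∂_α g_{ρβ}(y)`). -/
noncomputable def Christoffel (d : ℕ)
    (g : (Fin (d + 1) → ℝ) → Matrix (Fin (d + 1)) (Fin (d + 1)) ℝ)
    (Dg : (Fin (d + 1) → ℝ) → Fin (d + 1) → Fin (d + 1) → Fin (d + 1) → ℝ)
    (y : Fin (d + 1) → ℝ) (μ α β : Fin (d + 1)) : ℝ :=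
  (1 / 2) * ∑ ρ, (g y)⁻¹ μ ρ * (Dg y α ρ β + Dg y β ρ α - Dg y ρ α β)

/-- The Jüttner-type equilibrium distribution `φ(x,p) = exp(−α(x) + β_μ(x) p^μ)`. -/
noncomputable def juttner (d : ℕ) (α : (Fin (d + 1) → ℝ) → ℝ)
    (β : (Fin (d + 1) → ℝ) → Fin (d + 1) → ℝ)
    (z : (Fin (d + 1) → ℝ) × (Fin (d + 1) → ℝ)) : ℝ :=
  Real.exp (-α z.1 + ∑ μ, β z.1 μ * z.2 μ)

lemma juttner_fderiv {d : ℕ} (α : (Fin (d + 1) → ℝ) → ℝ)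
    (β : (Fin (d + 1) → ℝ) → Fin (d + 1) → ℝ)
    (hα : Differentiable ℝ α) (hβ : ∀ μ, Differentiable ℝ fun x => β x μ)
    (x p v w : Fin (d + 1) → ℝ) :
    fderiv ℝ (juttner d α β) (x, p) (v, w) =
      juttner d α β (x, p) *
        (-(fderiv ℝ α x v) +
          ∑ μ, (fderiv ℝ (fun z => β z μ) x v * p μ + β x μ * w μ)) := by
  set E : (Fin (d+1) → ℝ) × (Fin (d+1) → ℝ) := (x, p)
  have h1 : HasFDerivAt (fun z : (Fin (d+1) → ℝ) × (Fin (d+1) → ℝ) => α z.1)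
      ((fderiv ℝ α x).comp (ContinuousLinearMap.fst ℝ (Fin (d+1) → ℝ) (Fin (d+1) → ℝ))) E :=
    (hα x).hasFDerivAt.comp E hasFDerivAt_fst
  have h2 : ∀ μ : Fin (d+1), HasFDerivAt
      (fun z : (Fin (d+1) → ℝ) × (Fin (d+1) → ℝ) => β z.1 μ * z.2 μ)
      (β x μ • (((ContinuousLinearMap.proj μ : (Fin (d+1) → ℝ) →L[ℝ] ℝ)).comp (ContinuousLinearMap.snd ℝ (Fin (d+1) → ℝ) (Fin (d+1) → ℝ)))
        + p μ • ((fderiv ℝ (fun z => β z μ) x).comp (ContinuousLinearMap.fst ℝ (Fin (d+1) → ℝ) (Fin (d+1) → ℝ)))) E := by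
    intro μ
    have hb : HasFDerivAt (fun z : (Fin (d+1) → ℝ) × (Fin (d+1) → ℝ) => β z.1 μ)
        ((fderiv ℝ (fun z => β z μ) x).comp (ContinuousLinearMap.fst ℝ (Fin (d+1) → ℝ) (Fin (d+1) → ℝ))) E :=
      HasFDerivAt.comp (g := fun z => β z μ) (f := Prod.fst) E ((hβ μ) x).hasFDerivAt hasFDerivAt_fst
    have hp : HasFDerivAt (fun z : (Fin (d+1) → ℝ) × (Fin (d+1) → ℝ) => z.2 μ)
        (((ContinuousLinearMap.proj μ : (Fin (d+1) → ℝ) →L[ℝ] ℝ)).comp (ContinuousLinearMap.snd ℝ (Fin (d+1) → ℝ) (Fin (d+1) → ℝ))) E :=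
      (((ContinuousLinearMap.proj μ : (Fin (d+1) → ℝ) →L[ℝ] ℝ)).hasFDerivAt.comp E hasFDerivAt_snd)
    exact hb.mul hp
  have h3 : HasFDerivAt (fun z : (Fin (d+1) → ℝ) × (Fin (d+1) → ℝ) =>
      -α z.1 + ∑ μ, β z.1 μ * z.2 μ)
      (-( (fderiv ℝ α x).comp (ContinuousLinearMap.fst ℝ (Fin (d+1) → ℝ) (Fin (d+1) → ℝ))) +
        ∑ μ, (β x μ • (((ContinuousLinearMap.proj μ : (Fin (d+1) → ℝ) →L[ℝ] ℝ)).comp (ContinuousLinearMap.snd ℝ (Fin (d+1) → ℝ) (Fin (d+1) → ℝ)))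
          + p μ • ((fderiv ℝ (fun z => β z μ) x).comp (ContinuousLinearMap.fst ℝ (Fin (d+1) → ℝ) (Fin (d+1) → ℝ))))) E :=
    h1.neg.add (HasFDerivAt.fun_sum fun μ _ => h2 μ)
  have h4 := h3.exp
  rw [show (juttner d α β) = (fun z : (Fin (d+1) → ℝ) × (Fin (d+1) → ℝ) =>
    Real.exp (-α z.1 + ∑ μ, β z.1 μ * z.2 μ)) from rfl, h4.fderiv]
  simp only [juttner, ContinuousLinearMap.smul_apply, ContinuousLinearMap.add_apply,
    ContinuousLinearMap.neg_apply, ContinuousLinearMap.comp_apply,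
    ContinuousLinearMap.coe_fst', ContinuousLinearMap.coe_snd',
    ContinuousLinearMap.proj_apply, ContinuousLinearMap.sum_apply, smul_eq_mul]
  ring_nf
  congr 1
  exact congrArg _ (Finset.sum_congr rfl fun μ _ => by ring)

/-- the equilibrium conditions imply the Liouville equation. If at every
`x`: (i) `∂_μ α + q β^ν F_{μν} = 0`, and (ii) `½(∂_μ β_ν + ∂_ν β_μ) − Γ^ρ_{μν} β_ρ = 0`,
then the Jüttner distribution `φ(x,p) = exp(−α(x) + β_μ(x) p^μ)` satisfies the Liouville
equation `p^μ (∂φ/∂x^μ − Γ^ρ_{μσ} p^σ ∂φ/∂p^ρ) + q g^{μρ} F_{ρν} p^ν ∂φ/∂p^μ = 0`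
identically. -/
theorem stmt_13 (d : ℕ) (hd : 1 ≤ d) (q : ℝ)
    (g : (Fin (d + 1) → ℝ) → Matrix (Fin (d + 1)) (Fin (d + 1)) ℝ)
    (Dg : (Fin (d + 1) → ℝ) → Fin (d + 1) → Fin (d + 1) → Fin (d + 1) → ℝ)
    (hgsymm : ∀ x μ ν, g x μ ν = g x ν μ)
    (hginv : ∀ x, IsUnit (g x).det)
    (hDg : ∀ x μ ν, HasFDerivAt (fun z => g z μ ν)
      (∑ α, Dg x α μ ν • (ContinuousLinearMap.proj α : ((Fin (d + 1)) → ℝ) →L[ℝ] ℝ)) x)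
    (F : (Fin (d + 1) → ℝ) → Matrix (Fin (d + 1)) (Fin (d + 1)) ℝ)
    (hFanti : ∀ x μ ν, F x μ ν = -F x ν μ)
    (α : (Fin (d + 1) → ℝ) → ℝ) (β : (Fin (d + 1) → ℝ) → Fin (d + 1) → ℝ)
    (hα : Differentiable ℝ α) (hβ : ∀ μ, Differentiable ℝ fun x => β x μ)
    (hi : ∀ (x : Fin (d + 1) → ℝ) (μ : Fin (d + 1)),
      fderiv ℝ α x (Pi.single μ 1)
        + q * ∑ ν, (∑ ρ, (g x)⁻¹ ν ρ * β x ρ) * F x μ ν = 0)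
    (hii : ∀ (x : Fin (d + 1) → ℝ) (μ ν : Fin (d + 1)),
      (1 / 2) * (fderiv ℝ (fun z => β z ν) x (Pi.single μ 1)
          + fderiv ℝ (fun z => β z μ) x (Pi.single ν 1))
        - ∑ ρ, Christoffel d g Dg x ρ μ ν * β x ρ = 0) :
    ∀ (x p : Fin (d + 1) → ℝ),
      (∑ μ, p μ *
        (fderiv ℝ (juttner d α β) (x, p) ((Pi.single μ 1 : Fin (d + 1) → ℝ), 0)
          - ∑ ρ, (∑ σ, Christoffel d g Dg x ρ μ σ * p σ) *
              fderiv ℝ (juttner d α β) (x, p) (0, (Pi.single ρ 1 : Fin (d + 1) → ℝ))))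
      + q * ∑ μ, (∑ ρ, (g x)⁻¹ μ ρ * ∑ ν, F x ρ ν * p ν) *
          fderiv ℝ (juttner d α β) (x, p) (0, (Pi.single μ 1 : Fin (d + 1) → ℝ)) = 0 := by
  intro x p
  set φ := juttner d α β (x, p) with hφdef
  set a : Fin (d+1) → ℝ := fun μ => fderiv ℝ α x (Pi.single μ 1) with ha
  set b : Fin (d+1) → Fin (d+1) → ℝ :=
    fun μ ν => fderiv ℝ (fun z => β z ν) x (Pi.single μ 1) with hb
  set c : Fin (d+1) → Fin (d+1) → Fin (d+1) → ℝ := Christoffel d g Dg x with hc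
  set G : Matrix (Fin (d+1)) (Fin (d+1)) ℝ := (g x)⁻¹ with hG
  set B : Fin (d+1) → ℝ := fun ν => ∑ ρ, G ν ρ * β x ρ with hB
  -- symmetry of the inverse metric
  have hGsym : ∀ μ ν, G μ ν = G ν μ := by
    intro μ ν
    have ht : (g x).transpose = g x := by
      ext i j; exact hgsymm x j i
    calc G μ ν = ((g x)⁻¹).transpose ν μ := rfl
      _ = ((g x).transpose)⁻¹ ν μ := by rw [Matrix.transpose_nonsing_inv]
      _ = G ν μ := by rw [ht]
  -- symmetry of Dg in the last two indices
  have hDgsym : ∀ σ μ ν : Fin (d+1), Dg x σ μ ν = Dg x σ ν μ := by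
    intro σ μ ν
    have h1 := (hDg x μ ν).fderiv
    have h2 := (hDg x ν μ).fderiv
    have hfun : (fun z => g z μ ν) = (fun z => g z ν μ) := funext fun z => hgsymm z μ ν
    have heq : (∑ α, Dg x α μ ν • (ContinuousLinearMap.proj α : ((Fin (d + 1)) → ℝ) →L[ℝ] ℝ))
        = (∑ α, Dg x α ν μ • (ContinuousLinearMap.proj α : ((Fin (d + 1)) → ℝ) →L[ℝ] ℝ)) := by
      rw [← h1, ← h2, hfun]
    have := congrArg (fun L : ((Fin (d + 1)) → ℝ) →L[ℝ] ℝ => L (Pi.single σ 1)) heq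
    simpa [ContinuousLinearMap.proj_apply, Pi.single_apply, mul_ite,
      Finset.sum_ite_eq'] using this
  -- symmetry of Christoffel symbols in the lower indices
  have hcsym : ∀ ρ μ ν, c ρ μ ν = c ρ ν μ := by
    intro ρ μ ν
    simp only [hc, Christoffel]
    congr 1
    exact Finset.sum_congr rfl fun σ _ => by rw [hDgsym σ μ ν]; ring
  -- derivative evaluations
  have hx' : ∀ μ : Fin (d+1),
      fderiv ℝ (juttner d α β) (x, p) ((Pi.single μ 1 : Fin (d+1) → ℝ), 0) =
        φ * (-(a μ) + ∑ ν, b μ ν * p ν) := by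
    intro μ
    rw [juttner_fderiv α β hα hβ x p (Pi.single μ 1) 0]
    simp [ha, hb]
    exact Or.inl rfl
  have hp' : ∀ ρ : Fin (d+1),
      fderiv ℝ (juttner d α β) (x, p) ((0 : Fin (d+1) → ℝ), Pi.single ρ 1) =
        φ * β x ρ := by
    intro ρ
    rw [juttner_fderiv α β hα hβ x p 0 (Pi.single ρ 1)]
    simp [Pi.single_apply, mul_ite, Finset.sum_ite_eq']
    exact Or.inl rfl
  simp only [hx', hp']
  -- factor out φ
  have t1 : ∑ μ, p μ * (φ * (-(a μ) + ∑ ν, b μ ν * p ν)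
        - ∑ ρ, (∑ σ, c ρ μ σ * p σ) * (φ * β x ρ))
      = φ * ∑ μ, p μ * ((-(a μ) + ∑ ν, b μ ν * p ν)
          - ∑ ρ, (∑ σ, c ρ μ σ * p σ) * β x ρ) := by
    rw [Finset.mul_sum]
    refine Finset.sum_congr rfl fun μ _ => ?_
    rw [show ∑ ρ, (∑ σ, c ρ μ σ * p σ) * (φ * β x ρ)
        = φ * ∑ ρ, (∑ σ, c ρ μ σ * p σ) * β x ρ from by
      rw [Finset.mul_sum]; exact Finset.sum_congr rfl fun ρ _ => by ring]
    ring
  have t2 : q * ∑ μ, (∑ ρ, G μ ρ * ∑ ν, F x ρ ν * p ν) * (φ * β x μ)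
      = φ * (q * ∑ μ, (∑ ρ, G μ ρ * ∑ ν, F x ρ ν * p ν) * β x μ) := by
    rw [show ∑ μ, (∑ ρ, G μ ρ * ∑ ν, F x ρ ν * p ν) * (φ * β x μ)
        = φ * ∑ μ, (∑ ρ, G μ ρ * ∑ ν, F x ρ ν * p ν) * β x μ from by
      rw [Finset.mul_sum]; exact Finset.sum_congr rfl fun μ _ => by ring]
    ring
  rw [t1, t2, ← mul_add]
  -- it suffices to kill the bracket
  apply mul_eq_zero_of_right
  -- equilibrium conditions, rephrased
  have hii' : ∀ μ ν, b μ ν + b ν μ = 2 * ∑ ρ, c ρ μ ν * β x ρ := by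
    intro μ ν; have := hii x μ ν
    simp only [← hb, ← hc] at this
    linarith
  have hia : ∀ μ, a μ = -(q * ∑ ν, B ν * F x μ ν) := by
    intro μ; have := hi x μ
    simp only [← ha, ← hG, ← hB] at this
    linarith
  -- quadratic part
  have e1 : ∑ μ, ∑ ν, p μ * p ν * b ν μ = ∑ μ, ∑ ν, p μ * p ν * b μ ν := by
    rw [Finset.sum_comm]
    exact Finset.sum_congr rfl fun μ _ => Finset.sum_congr rfl fun ν _ => by ring
  have e2 : ∑ μ, p μ * ∑ ν, b μ ν * p ν = ∑ μ, ∑ ν, p μ * p ν * b μ ν :=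
    Finset.sum_congr rfl fun μ _ => by
      rw [Finset.mul_sum]; exact Finset.sum_congr rfl fun ν _ => by ring
  have e3 : ∀ μ, p μ * ∑ ρ, (∑ σ, c ρ μ σ * p σ) * β x ρ
      = ∑ ν, p μ * p ν * ∑ ρ, c ρ μ ν * β x ρ := by
    intro μ
    calc p μ * ∑ ρ, (∑ σ, c ρ μ σ * p σ) * β x ρ
        = ∑ ρ, ∑ σ, p μ * p σ * (c ρ μ σ * β x ρ) := by
          rw [Finset.mul_sum]
          refine Finset.sum_congr rfl fun ρ _ => ?_
          rw [Finset.sum_mul, Finset.mul_sum]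
          exact Finset.sum_congr rfl fun σ _ => by ring
      _ = ∑ σ, ∑ ρ, p μ * p σ * (c ρ μ σ * β x ρ) := Finset.sum_comm
      _ = ∑ ν, p μ * p ν * ∑ ρ, c ρ μ ν * β x ρ := by
          refine Finset.sum_congr rfl fun ν _ => ?_
          rw [Finset.mul_sum]
  have hquad : ∑ μ, p μ * ∑ ν, b μ ν * p ν
      = ∑ μ, p μ * ∑ ρ, (∑ σ, c ρ μ σ * p σ) * β x ρ := by
    have hsum : ∑ μ, ∑ ν, (p μ * p ν * b μ ν + p μ * p ν * b ν μ)
        = ∑ μ, ∑ ν, 2 * (p μ * p ν * ∑ ρ, c ρ μ ν * β x ρ) :=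
      Finset.sum_congr rfl fun μ _ => Finset.sum_congr rfl fun ν _ => by
        rw [show p μ * p ν * b μ ν + p μ * p ν * b ν μ
            = p μ * p ν * (b μ ν + b ν μ) from by ring, hii' μ ν]
        try ring
    have hs1 : ∑ μ, ∑ ν, (p μ * p ν * b μ ν + p μ * p ν * b ν μ)
        = (∑ μ, ∑ ν, p μ * p ν * b μ ν) + ∑ μ, ∑ ν, p μ * p ν * b ν μ := by
      rw [← Finset.sum_add_distrib]
      exact Finset.sum_congr rfl fun μ _ => by rw [← Finset.sum_add_distrib]
    have hs2 : ∑ μ, ∑ ν, 2 * (p μ * p ν * ∑ ρ, c ρ μ ν * β x ρ)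
        = 2 * ∑ μ, ∑ ν, p μ * p ν * ∑ ρ, c ρ μ ν * β x ρ := by
      rw [Finset.mul_sum]
      exact Finset.sum_congr rfl fun μ _ => by rw [Finset.mul_sum]
    rw [e2, Finset.sum_congr rfl fun μ (_ : μ ∈ Finset.univ) => e3 μ]
    rw [hs1, e1, hs2] at hsum
    linarith
  -- force part
  have hforce : ∑ μ, (∑ ρ, G μ ρ * ∑ ν, F x ρ ν * p ν) * β x μ
      = -∑ μ, p μ * ∑ ν, B ν * F x μ ν := by
    calc ∑ μ, (∑ ρ, G μ ρ * ∑ ν, F x ρ ν * p ν) * β x μ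
        = ∑ μ, ∑ ρ, (G ρ μ * β x μ) * ∑ ν, F x ρ ν * p ν := by
          refine Finset.sum_congr rfl fun μ _ => ?_
          rw [Finset.sum_mul]
          exact Finset.sum_congr rfl fun ρ _ => by rw [hGsym μ ρ]; ring
      _ = ∑ ρ, B ρ * ∑ ν, F x ρ ν * p ν := by
          rw [Finset.sum_comm]
          refine Finset.sum_congr rfl fun ρ _ => ?_
          rw [hB, Finset.sum_mul]
      _ = ∑ ρ, ∑ ν, p ν * (B ρ * F x ρ ν) := by
          refine Finset.sum_congr rfl fun ρ _ => ?_
          rw [Finset.mul_sum]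
          exact Finset.sum_congr rfl fun ν _ => by ring
      _ = ∑ ν, p ν * ∑ ρ, B ρ * F x ρ ν := by
          rw [Finset.sum_comm]
          exact Finset.sum_congr rfl fun ν _ => by rw [Finset.mul_sum]
      _ = -∑ μ, p μ * ∑ ν, B ν * F x μ ν := by
          rw [← Finset.sum_neg_distrib]
          refine Finset.sum_congr rfl fun μ _ => ?_
          rw [show -(p μ * ∑ ν, B ν * F x μ ν) = p μ * ∑ ν, B ν * (-F x μ ν) from by
            rw [Finset.sum_congr rfl fun ν (_ : ν ∈ Finset.univ) => (by ring :
              B ν * (-F x μ ν) = -(B ν * F x μ ν)), Finset.sum_neg_distrib]; ring]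
          congr 1
          exact Finset.sum_congr rfl fun ν _ => by rw [← hFanti x ν μ]
  -- put it all together
  have hsplit : ∑ μ, p μ * ((-(a μ) + ∑ ν, b μ ν * p ν) - ∑ ρ, (∑ σ, c ρ μ σ * p σ) * β x ρ)
      = (∑ μ, p μ * (-(a μ)))
        + ((∑ μ, p μ * ∑ ν, b μ ν * p ν)
          - ∑ μ, p μ * ∑ ρ, (∑ σ, c ρ μ σ * p σ) * β x ρ) := by
    rw [← Finset.sum_sub_distrib, ← Finset.sum_add_distrib]
    exact Finset.sum_congr rfl fun μ _ => by ring
  rw [hsplit, hquad, hforce, sub_self, add_zero]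
  have : ∑ μ, p μ * (-(a μ)) = q * ∑ μ, p μ * ∑ ν, B ν * F x μ ν := by
    rw [Finset.mul_sum]
    exact Finset.sum_congr rfl fun μ _ => by rw [hia μ]; ring
  rw [this]
  ring
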